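/- arXiv:1902.09083 — 8 statements merged into one kernel-verified Lean document; each statement's English description precedes it below -/
import Mathlib

section
/- For positive natural numbers m₁, m₂, m₃, the direct product Z_{m₁} × Z_{m₂} × Z_{m₃} is isomorphic to Z_{a₁} × Z_{a₂} × Z_{a₃}, where a₁ = gcd(m₁, m₂, m₃), a₂ = lcm(m₁, gcd(m₂, m₃)), and a₃ = lcm(m₂, m₃). -/
lemma key (a b : ℕ) (ha : 0 < a) (hb : 0 < b) :
    Nonempty ((ZMod (Nat.gcd a b) × ZMod (Nat.lcm a b)) ≃+ (ZMod a × ZMod b)) := by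
  set d := Nat.gcd a b with hd
  set l := Nat.lcm a b with hl
  have hd0 : 0 < d := Nat.gcd_pos_of_pos_left b ha
  have hl0 : 0 < l := Nat.lcm_pos ha hb
  have hda : d ∣ a := Nat.gcd_dvd_left a b
  have hdb : d ∣ b := Nat.gcd_dvd_right a b
  have hcop : Nat.Coprime (a / d) (b / d) := Nat.coprime_div_gcd_div_gcd hd0
  set A : ℤ := Nat.gcdA (a / d) (b / d) with hA
  set B : ℤ := Nat.gcdB (a / d) (b / d) with hB
  have hbez : ((a / d : ℕ) : ℤ) * A + ((b / d : ℕ) : ℤ) * B = 1 := by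
    have := Nat.gcd_eq_gcd_ab (a / d) (b / d)
    rw [hcop] at this
    simpa using this.symm
  set φ : ℤ →+ ZMod a × ZMod b := AddMonoidHom.mk'
    (fun n => (((n * (A * (a / d : ℕ)) : ℤ) : ZMod a), ((-(n * (B * (b / d : ℕ))) : ℤ) : ZMod b)))
    (by intro x y; simp only [Prod.mk_add_mk, Prod.mk.injEq]
        constructor <;> push_cast <;> ring) with hφ
  have hφd : φ (d : ℤ) = 0 := by
    refine Prod.ext ?_ ?_
    · show (((d : ℤ) * (A * (a / d : ℕ)) : ℤ) : ZMod a) = 0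
      rw [ZMod.intCast_zmod_eq_zero_iff_dvd]
      have h : (d : ℤ) * (A * (a / d : ℕ)) = A * a := by
        rw [show ((a : ℤ)) = ((d : ℕ) : ℤ) * ((a / d : ℕ) : ℤ) by
          rw [← Nat.cast_mul, Nat.mul_div_cancel' hda]]
        ring
      rw [h]
      exact Dvd.intro_left A rfl
    · show ((-((d : ℤ) * (B * (b / d : ℕ))) : ℤ) : ZMod b) = 0
      rw [ZMod.intCast_zmod_eq_zero_iff_dvd]
      have h : -((d : ℤ) * (B * (b / d : ℕ))) = (-B) * b := by
        rw [show ((b : ℤ)) = ((d : ℕ) : ℤ) * ((b / d : ℕ) : ℤ) by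
          rw [← Nat.cast_mul, Nat.mul_div_cancel' hdb]]
        ring
      rw [h]
      exact Dvd.intro_left (-B) rfl
  set s : ZMod d →+ ZMod a × ZMod b := ZMod.lift d ⟨φ, hφd⟩ with hs
  set ι : ZMod l →+ ZMod a × ZMod b :=
    ((ZMod.castHom (Nat.dvd_lcm_left a b) (ZMod a)).toAddMonoidHom.prod
     (ZMod.castHom (Nat.dvd_lcm_right a b) (ZMod b)).toAddMonoidHom) with hι
  set f : ZMod d × ZMod l →+ ZMod a × ZMod b := s.coprod ι with hf
  have hinj : Function.Injective f := by
    rw [injective_iff_map_eq_zero]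
    rintro ⟨t, w⟩ h0
    obtain ⟨n, rfl⟩ := ZMod.intCast_surjective t
    obtain ⟨m, rfl⟩ := ZMod.intCast_surjective w
    have hfval : f ((n : ZMod d), (m : ZMod l)) =
        (((n * (A * (a / d : ℕ)) + m : ℤ) : ZMod a),
         ((-(n * (B * (b / d : ℕ))) + m : ℤ) : ZMod b)) := by
      show s (n : ZMod d) + ι (m : ZMod l) = _
      rw [hs, ZMod.lift_coe]
      refine Prod.ext ?_ ?_ <;> simp [hι, hφ, map_intCast] <;> push_cast <;> ring
    rw [hfval] at h0
    have h1 : (a : ℤ) ∣ n * (A * (a / d : ℕ)) + m := by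
      rw [← ZMod.intCast_zmod_eq_zero_iff_dvd]
      exact congrArg Prod.fst h0
    have h2 : (b : ℤ) ∣ -(n * (B * (b / d : ℕ))) + m := by
      rw [← ZMod.intCast_zmod_eq_zero_iff_dvd]
      exact congrArg Prod.snd h0
    have hdvd1 : (d : ℤ) ∣ (a : ℤ) := Int.natCast_dvd_natCast.mpr hda
    have hdvd2 : (d : ℤ) ∣ (b : ℤ) := Int.natCast_dvd_natCast.mpr hdb
    have ht : (d : ℤ) ∣ n := by
      have ha' : (d : ℤ) ∣ n * (A * (a / d : ℕ)) + m := dvd_trans hdvd1 h1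
      have hb' : (d : ℤ) ∣ -(n * (B * (b / d : ℕ))) + m := dvd_trans hdvd2 h2
      have hsum : (d : ℤ) ∣ n * (A * (a / d : ℕ)) + n * (B * (b / d : ℕ)) := by
        have h := dvd_sub ha' hb'
        have e : (n * (A * (a / d : ℕ)) + m) - (-(n * (B * (b / d : ℕ))) + m)
            = n * (A * (a / d : ℕ)) + n * (B * (b / d : ℕ)) := by ring
        rwa [e] at h
      have e2 : n * (A * (a / d : ℕ)) + n * (B * (b / d : ℕ))
          = n * (((a / d : ℕ) : ℤ) * A + ((b / d : ℕ) : ℤ) * B) := by ring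
      rwa [e2, hbez, mul_one] at hsum
    have ht0 : ((n : ℤ) : ZMod d) = 0 := by
      rwa [ZMod.intCast_zmod_eq_zero_iff_dvd]
    have hma : (a : ℤ) ∣ m := by
      obtain ⟨k, hk⟩ := ht
      have hna : (a : ℤ) ∣ n * (A * (a / d : ℕ)) := by
        rw [hk, show (d : ℤ) * k * (A * (a / d : ℕ))
              = (k * A) * ((d : ℤ) * ((a / d : ℕ) : ℤ)) by ring,
          show ((d : ℤ)) * ((a / d : ℕ) : ℤ) = (a : ℤ) by
            rw [← Nat.cast_mul, Nat.mul_div_cancel' hda]]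
        exact Dvd.intro_left _ rfl
      have := dvd_sub h1 hna
      simpa using this
    have hmb : (b : ℤ) ∣ m := by
      obtain ⟨k, hk⟩ := ht
      have hnb : (b : ℤ) ∣ n * (B * (b / d : ℕ)) := by
        rw [hk, show (d : ℤ) * k * (B * (b / d : ℕ))
              = (k * B) * ((d : ℤ) * ((b / d : ℕ) : ℤ)) by ring,
          show ((d : ℤ)) * ((b / d : ℕ) : ℤ) = (b : ℤ) by
            rw [← Nat.cast_mul, Nat.mul_div_cancel' hdb]]
        exact Dvd.intro_left _ rfl
      have h2' : (b : ℤ) ∣ n * (B * (b / d : ℕ)) + (-(n * (B * (b / d : ℕ))) + m) :=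
        dvd_add hnb h2
      simpa using h2'
    have hml : (l : ℤ) ∣ m := by
      have h := Int.dvd_natAbs.mp (Int.natCast_dvd_natCast.mpr
        (Int.lcm_dvd (Int.dvd_natAbs.mpr hma) (Int.dvd_natAbs.mpr hmb)))
      simpa [Int.lcm, hl] using h
    have hm0 : ((m : ℤ) : ZMod l) = 0 := by
      rwa [ZMod.intCast_zmod_eq_zero_iff_dvd]
    exact Prod.ext ht0 hm0
  haveI : NeZero a := ⟨ha.ne'⟩
  haveI : NeZero b := ⟨hb.ne'⟩
  haveI : NeZero d := ⟨hd0.ne'⟩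
  haveI : NeZero l := ⟨hl0.ne'⟩
  have hcard : Fintype.card (ZMod d × ZMod l) = Fintype.card (ZMod a × ZMod b) := by
    simp [ZMod.card, hd, hl, Nat.gcd_mul_lcm]
  have hbij : Function.Bijective f :=
    (Fintype.bijective_iff_injective_and_card f).mpr ⟨hinj, hcard⟩
  exact ⟨AddEquiv.ofBijective f hbij⟩

theorem stmt_1 (m₁ m₂ m₃ : ℕ) (h₁ : 0 < m₁) (h₂ : 0 < m₂) (h₃ : 0 < m₃) :
    Nonempty ((ZMod m₁ × ZMod m₂ × ZMod m₃) ≃+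
      (ZMod (Nat.gcd m₁ (Nat.gcd m₂ m₃)) ×
       ZMod (Nat.lcm m₁ (Nat.gcd m₂ m₃)) ×
       ZMod (Nat.lcm m₂ m₃))) := by
  obtain ⟨e23⟩ := key m₂ m₃ h₂ h₃
  obtain ⟨e1⟩ := key m₁ (Nat.gcd m₂ m₃) h₁ (Nat.gcd_pos_of_pos_left m₃ h₂)
  refine ⟨?_⟩
  have E : (ZMod (Nat.gcd m₁ (Nat.gcd m₂ m₃)) ×
       ZMod (Nat.lcm m₁ (Nat.gcd m₂ m₃)) ×
       ZMod (Nat.lcm m₂ m₃)) ≃+ (ZMod m₁ × ZMod m₂ × ZMod m₃) :=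
    (AddEquiv.prodAssoc).symm.trans <|
      (e1.prodCongr (AddEquiv.refl _)).trans <|
        (AddEquiv.prodAssoc).trans <|
          (AddEquiv.refl (ZMod m₁)).prodCongr e23
  exact E.symm
end

section
/- Let s ≥ 1 and m₁, …, m_s be positive natural numbers. Define a₁ = gcd(m₁, …, m_s), a_i = lcm(m_{i-1}, gcd(m_i, …, m_s)) for 2 ≤ i ≤ s-1, and a_s = lcm(m_{s-1}, m_s). Then the direct product Z_{m₁} × ⋯ × Z_{m_s} is isomorphic to Z_{a₁} × ⋯ × Z_{a_s}. -/
section Aux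

/-- A good splitting of `lcm m n` into coprime parts. -/
def GoodSplit (m n : ℕ) : Prop :=
  ∃ a b : ℕ, a ∣ m ∧ b ∣ n ∧ Nat.Coprime a b ∧ a * b = Nat.lcm m n ∧
    Nat.Coprime a (m / a) ∧ Nat.Coprime b (n / b) ∧ Nat.Coprime (m / a) (n / b)

theorem goodsplit_step (N : ℕ)
    (IH : ∀ m n : ℕ, m + n ≤ N → 0 < m → 0 < n → GoodSplit m n)
    (m n : ℕ) (hmn : m + n ≤ N + 1) (hm : 0 < m) (hn : 0 < n)
    (p : ℕ) (hp : p.Prime) (hpn : p ∣ n)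
    (hk : n.factorization p ≤ m.factorization p) : GoodSplit m n := by
  set k := n.factorization p with hkdef
  set n' := n / p ^ k with hn'def
  have hn0 : n ≠ 0 := hn.ne'
  have hkpos : 0 < k := hp.factorization_pos_of_dvd hn0 hpn
  have hpn' : ¬ p ∣ n' := Nat.not_dvd_ordCompl hp hn0
  have hn'dvd : n' ∣ n := Nat.ordCompl_dvd n p
  have hn'pos : 0 < n' := Nat.ordCompl_pos p hn0
  have hsplit : p ^ k * n' = n := Nat.ordProj_mul_ordCompl_eq_self n p
  have hn'lt : n' < n := Nat.div_lt_self hn (Nat.one_lt_pow hkpos.ne' hp.one_lt)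
  have hpkm : p ^ k ∣ m := (pow_dvd_pow p hk).trans (Nat.ordProj_dvd m p)
  have hcpn' : Nat.Coprime (p ^ k) n' := (Nat.coprime_ordCompl hp hn0).pow_left k
  have hlcm : Nat.lcm m n' = Nat.lcm m n := by
    apply Nat.dvd_antisymm
    · exact Nat.lcm_dvd (Nat.dvd_lcm_left _ _) (hn'dvd.trans (Nat.dvd_lcm_right _ _))
    · refine Nat.lcm_dvd (Nat.dvd_lcm_left _ _) ?_
      rw [← hsplit]
      exact hcpn'.mul_dvd_of_dvd_of_dvd (hpkm.trans (Nat.dvd_lcm_left _ _))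
        (Nat.dvd_lcm_right _ _)
  obtain ⟨a, b, ham, hbn', hab, habl, hca, hcb, hcc⟩ :=
    IH m n' (by omega) hm hn'pos
  have hpb : ¬ p ∣ b := fun h => hpn' (h.trans hbn')
  have hcbp : Nat.Coprime b (p ^ k) :=
    ((hp.coprime_iff_not_dvd.mpr hpb).symm).pow_right k
  have hpa' : ¬ p ∣ m / a := by
    intro h
    have hpm' : p ∣ m := h.trans (Nat.div_dvd_of_dvd ham)
    have h2 : p ∣ a * b := habl ▸ hpm'.trans (Nat.dvd_lcm_left m n')
    have hpa : p ∣ a := ((Nat.Prime.dvd_mul hp).mp h2).resolve_right hpb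
    have h3 : p ∣ Nat.gcd a (m / a) := Nat.dvd_gcd hpa h
    rw [hca] at h3
    exact hp.one_lt.ne' (Nat.dvd_one.mp h3)
  have hcap : Nat.Coprime (m / a) (p ^ k) :=
    ((hp.coprime_iff_not_dvd.mpr hpa').symm).pow_right k
  have hnb : n / b = p ^ k * (n' / b) := by
    rw [← hsplit, Nat.mul_div_assoc _ hbn']
  refine ⟨a, b, ham, hbn'.trans hn'dvd, hab, habl.trans hlcm, hca, ?_, ?_⟩
  · rw [hnb]; exact Nat.Coprime.mul_right hcbp hcb
  · rw [hnb]; exact Nat.Coprime.mul_right hcap hcc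

theorem goodsplit (m n : ℕ) (hm : 0 < m) (hn : 0 < n) : GoodSplit m n := by
  have key : ∀ N m n : ℕ, m + n ≤ N → 0 < m → 0 < n → GoodSplit m n := by
    intro N
    induction N with
    | zero => intro m n h hm hn; omega
    | succ N IH =>
      intro m n h hm hn
      by_cases hc : Nat.Coprime m n
      · refine ⟨m, n, dvd_rfl, dvd_rfl, hc, (hc.lcm_eq_mul).symm, ?_, ?_, ?_⟩ <;>
          simp [Nat.div_self hm, Nat.div_self hn, Nat.coprime_one_right, Nat.coprime_one_left]
      · set p := (Nat.gcd m n).minFac with hpdef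
        have hgpos : 0 < Nat.gcd m n := Nat.gcd_pos_of_pos_left n hm
        have hp : p.Prime := Nat.minFac_prime (fun h1 => hc h1)
        have hpg : p ∣ Nat.gcd m n := Nat.minFac_dvd _
        have hpm : p ∣ m := hpg.trans (Nat.gcd_dvd_left _ _)
        have hpn : p ∣ n := hpg.trans (Nat.gcd_dvd_right _ _)
        rcases le_total (n.factorization p) (m.factorization p) with hle | hle
        · exact goodsplit_step N IH m n h hm hn p hp hpn hle
        · obtain ⟨a, b, h1, h2, h3, h4, h5, h6, h7⟩ :=
            goodsplit_step N (fun x y hxy hx hy => IH x y (by omega) hx hy) n m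
              (by omega) hn hm p hp hpm hle
          exact ⟨b, a, h2, h1, h3.symm, by rw [Nat.mul_comm, h4, Nat.lcm_comm], h6, h5, h7.symm⟩
  exact key (m + n) m n le_rfl hm hn

/-- cast equivalence between `ZMod`s. -/
def zc {x y : ℕ} (h : x = y) : ZMod x ≃+ ZMod y := h ▸ AddEquiv.refl _

theorem pairIso (m n : ℕ) (hm : 0 < m) (hn : 0 < n) :
    Nonempty ((ZMod m × ZMod n) ≃+ (ZMod (Nat.gcd m n) × ZMod (Nat.lcm m n))) := by
  obtain ⟨a, b, ham, hbn, hab, habl, hca, hcb, hcc⟩ := goodsplit m n hm hn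
  have h1 : m = a * (m / a) := (Nat.mul_div_cancel' ham).symm
  have h2 : n = b * (n / b) := (Nat.mul_div_cancel' hbn).symm
  have hlcm : 0 < Nat.lcm m n := Nat.pos_of_ne_zero (Nat.lcm_ne_zero hm.ne' hn.ne')
  have h3 : (m / a) * (n / b) = Nat.gcd m n := by
    rw [Nat.div_mul_div_comm ham hbn, habl, ← Nat.gcd_mul_lcm m n,
      Nat.mul_div_cancel _ hlcm]
  have em : ZMod m ≃+ ZMod a × ZMod (m / a) :=
    (zc h1).trans (ZMod.chineseRemainder hca).toAddEquiv
  have en : ZMod n ≃+ ZMod b × ZMod (n / b) :=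
    (zc h2).trans (ZMod.chineseRemainder hcb).toAddEquiv
  exact ⟨(em.prodCongr en).trans ((AddEquiv.prodProdProdComm _ _ _ _).trans
    ((AddEquiv.prodComm).trans (AddEquiv.prodCongr
      (((ZMod.chineseRemainder hcc).toAddEquiv.symm).trans (zc h3))
      (((ZMod.chineseRemainder hab).toAddEquiv.symm).trans (zc habl)))))⟩

def piSuccEquiv {s : ℕ} (M : Fin (s + 1) → Type) [∀ i, AddCommGroup (M i)] :
    (∀ i, M i) ≃+ M 0 × (∀ i : Fin s, M i.succ) where
  toFun f := (f 0, fun i => f i.succ)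
  invFun p := Fin.cons p.1 p.2
  left_inv f := funext (fun i => Fin.cases rfl (fun j => rfl) i)
  right_inv p := rfl
  map_add' f g := rfl

def piZc {k : ℕ} {f g : Fin k → ℕ} (h : ∀ i, f i = g i) :
    (∀ i, ZMod (f i)) ≃+ (∀ i, ZMod (g i)) :=
  AddEquiv.piCongrRight (fun i => zc (h i))

lemma gcd_univ_succ {s : ℕ} (m : Fin (s + 1) → ℕ) :
    Finset.univ.gcd m = Nat.gcd (m 0) (Finset.univ.gcd (m ∘ Fin.succ)) := by
  apply Nat.dvd_antisymm
  · apply Nat.dvd_gcd (Finset.gcd_dvd (Finset.mem_univ _))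
    apply Finset.dvd_gcd
    intro i _
    exact Finset.gcd_dvd (Finset.mem_univ _)
  · apply Finset.dvd_gcd
    intro j _
    rcases Fin.eq_zero_or_eq_succ j with rfl | ⟨i, rfl⟩
    · exact Nat.gcd_dvd_left _ _
    · exact (Nat.gcd_dvd_right _ _).trans (Finset.gcd_dvd (Finset.mem_univ i))

lemma gcd_filter_succ {s : ℕ} (m : Fin (s + 1) → ℕ) (k : ℕ) :
    ((Finset.univ.filter (fun j : Fin (s + 1) => k + 1 ≤ (j : ℕ))).gcd m)
      = ((Finset.univ.filter (fun j : Fin s => k ≤ (j : ℕ))).gcd (m ∘ Fin.succ)) := by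
  apply Nat.dvd_antisymm
  · apply Finset.dvd_gcd
    intro i hi
    simp only [Finset.mem_filter, Finset.mem_univ, true_and] at hi
    exact Finset.gcd_dvd (by simp [Fin.val_succ]; omega)
  · apply Finset.dvd_gcd
    intro j hj
    simp only [Finset.mem_filter, Finset.mem_univ, true_and] at hj
    have hj0 : j ≠ 0 := by
      intro h; rw [h] at hj; simp at hj
    obtain ⟨i, rfl⟩ := Fin.exists_succ_eq.mpr hj0
    have : i ∈ Finset.univ.filter (fun j : Fin s => k ≤ (j : ℕ)) := by
      simp only [Finset.mem_filter, Finset.mem_univ, true_and]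
      simp [Fin.val_succ] at hj; omega
    exact (Finset.gcd_dvd this : _ ∣ (m ∘ Fin.succ) i)

lemma filter_le_eq {s : ℕ} (i : Fin s) :
    (Finset.univ.filter (fun j : Fin s => i ≤ j))
      = (Finset.univ.filter (fun j : Fin s => (i : ℕ) ≤ (j : ℕ))) := by
  apply Finset.filter_congr
  intro j _
  rw [Fin.le_def]

/-- The target sequence. -/
def AFun {s : ℕ} (m : Fin (s + 1) → ℕ) (i : Fin (s + 1)) : ℕ :=
  if (i : ℕ) = 0 then Finset.univ.gcd m
  else Nat.lcm (m ⟨(i : ℕ) - 1, by have := i.isLt; omega⟩)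
    ((Finset.univ.filter (fun j => i ≤ j)).gcd m)

lemma AFun_zero {s : ℕ} (m : Fin (s + 1) → ℕ) (i : Fin (s + 1)) (h : (i : ℕ) = 0) :
    AFun m i = Finset.univ.gcd m := by
  simp [AFun, h]

lemma AFun_pos {s : ℕ} (m : Fin (s + 1) → ℕ) (i : Fin (s + 1)) (h : 0 < (i : ℕ)) :
    AFun m i = Nat.lcm (m ⟨(i : ℕ) - 1, by have := i.isLt; omega⟩)
      ((Finset.univ.filter (fun j : Fin (s + 1) => (i : ℕ) ≤ (j : ℕ))).gcd m) := by
  rw [AFun, if_neg (by omega), filter_le_eq]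

theorem auxIso (s : ℕ) : ∀ (m : Fin (s + 1) → ℕ), (∀ i, 0 < m i) →
    Nonempty ((∀ i, ZMod (m i)) ≃+ (∀ i, ZMod (AFun m i))) := by
  induction s with
  | zero =>
    intro m hm
    have hA : AFun m = m := by
      funext i
      have h0 : (i : ℕ) = 0 := by have := i.isLt; omega
      rw [AFun_zero m i h0]
      have h1 : (Finset.univ : Finset (Fin 1)) = {i} := by
        apply Finset.eq_singleton_iff_unique_mem.mpr
        exact ⟨Finset.mem_univ i, fun j _ => Subsingleton.elim j i⟩
      rw [h1, Finset.gcd_singleton]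
      simp
    rw [hA]
    exact ⟨AddEquiv.refl _⟩
  | succ s IH =>
    intro m hm
    obtain ⟨e2⟩ := IH (m ∘ Fin.succ) (fun i => hm _)
    have hA'0 : AFun (m ∘ Fin.succ) 0 = Finset.univ.gcd (m ∘ Fin.succ) :=
      AFun_zero _ _ rfl
    have hA'0pos : 0 < AFun (m ∘ Fin.succ) 0 := by
      rw [hA'0]
      rcases Nat.eq_zero_or_pos (Finset.univ.gcd (m ∘ Fin.succ)) with h | h
      · exact absurd (Finset.gcd_eq_zero_iff.mp h 0 (Finset.mem_univ 0)) (hm _).ne'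
      · exact h
    obtain ⟨e4⟩ := pairIso (m 0) (AFun (m ∘ Fin.succ) 0) (hm 0) hA'0pos
    -- identify the gcd and lcm with components of AFun m
    have hE0 : Nat.gcd (m 0) (AFun (m ∘ Fin.succ) 0) = AFun m 0 := by
      rw [hA'0, AFun_zero m 0 rfl]
      exact (gcd_univ_succ m).symm
    have hE1 : Nat.lcm (m 0) (AFun (m ∘ Fin.succ) 0) = AFun m ((0 : Fin (s + 1)).succ) := by
      rw [hA'0, AFun_pos m ((0 : Fin (s + 1)).succ) (by simp)]
      refine congrArg₂ Nat.lcm ?_ ?_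
      · exact congrArg m (Fin.ext (by simp))
      · rw [show (((0 : Fin (s + 1)).succ : Fin (s + 2)) : ℕ) = 0 + 1 by simp,
          gcd_filter_succ]
        congr 1
        exact (Finset.filter_true_of_mem (fun j _ => Nat.zero_le _)).symm
    have hE2 : ∀ i : Fin s, AFun (m ∘ Fin.succ) i.succ = AFun m ((i.succ).succ) := by
      intro i
      rw [AFun_pos _ i.succ (by simp), AFun_pos m ((i.succ).succ) (by simp)]
      refine congrArg₂ Nat.lcm ?_ ?_
      · exact congrArg m (Fin.ext (by simp))
      · rw [show ((((i.succ).succ : Fin (s + 2))) : ℕ) = ((i : ℕ) + 1) + 1 by simp,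
          gcd_filter_succ, show (((i.succ : Fin (s + 1))) : ℕ) = (i : ℕ) + 1 by simp]
    refine ⟨(piSuccEquiv _).trans (((AddEquiv.refl (ZMod (m 0))).prodCongr
      (e2.trans (piSuccEquiv (fun i => ZMod (AFun (m ∘ Fin.succ) i))))).trans
      ((AddEquiv.prodAssoc.symm).trans
      (((e4.trans ((zc hE0).prodCongr (zc hE1))).prodCongr (piZc hE2)).trans
      (AddEquiv.prodAssoc.trans
      (((AddEquiv.refl (ZMod (AFun m 0))).prodCongr
        (piSuccEquiv (fun i : Fin (s + 1) => ZMod (AFun m i.succ))).symm).trans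
      (piSuccEquiv (fun i : Fin (s + 2) => ZMod (AFun m i))).symm)))))⟩

end Aux

theorem stmt_2 (s : ℕ) (hs : 1 ≤ s) (m a : Fin s → ℕ) (hm : ∀ i, 0 < m i)
    (ha0 : a ⟨0, by omega⟩ = Finset.univ.gcd m)
    (ha : ∀ i : Fin s, 0 < (i : ℕ) →
      a i = Nat.lcm (m ⟨(i : ℕ) - 1, by omega⟩)
        ((Finset.univ.filter (fun j : Fin s => i ≤ j)).gcd m)) :
    Nonempty ((∀ i, ZMod (m i)) ≃+ (∀ i, ZMod (a i))) := by
  obtain ⟨s', rfl⟩ : ∃ s', s = s' + 1 := ⟨s - 1, by omega⟩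
  have hae : a = AFun m := by
    funext i
    by_cases h : (i : ℕ) = 0
    · rw [AFun_zero m i h, show i = ⟨0, by omega⟩ from Fin.ext h, ha0]
    · rw [ha i (by omega), AFun, if_neg h]
  rw [hae]
  exact auxIso s' m hm
end

section
/- Let s ≥ 1 and μ₁, …, μ_s be natural numbers; set μ₀ = 0. Define α_i = max(μ_{i-1}, min(μ_i, μ_{i+1}, …, μ_s)) for i = 1, …, s. Then the multiset {α₁, …, α_s} equals the multiset {μ₁, …, μ_s}. -/
open Finset

noncomputable def aa (s : ℕ) (μ : Fin s → ℕ) (i : Fin s) : ℕ :=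
  max (if h : 0 < (i : ℕ) then μ ⟨(i : ℕ) - 1, by have := i.isLt; omega⟩ else 0)
    (sInf (↑((Finset.univ.filter (fun j : Fin s => i ≤ j)).image μ) : Set ℕ))

lemma map_univ_succ {β : Type*} (n : ℕ) (f : Fin (n+1) → β) :
    (Finset.univ.val.map f : Multiset β)
      = f 0 ::ₘ Finset.univ.val.map (fun j : Fin n => f j.succ) := by
  rw [Fin.univ_succ]
  simp only [Finset.cons_val, Multiset.map_cons, Finset.map_val, Multiset.map_map]
  rfl

lemma filter_succ (s : ℕ) (j : Fin (s+1)) :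
    (Finset.univ.filter (fun k : Fin (s+2) => j.succ ≤ k)) =
      (Finset.univ.filter (fun k : Fin (s+1) => j ≤ k)).map (Fin.succEmb (s+1)) := by
  ext k
  simp only [Finset.mem_filter, Finset.mem_univ, true_and, Finset.mem_map, Fin.succEmb,
    Function.Embedding.coeFn_mk, Fin.le_def, Fin.ext_iff, Fin.val_succ]
  constructor
  · intro h
    exact ⟨⟨(k : ℕ) - 1, by omega⟩, by simp; omega, by simp; omega⟩
  · rintro ⟨a, ha, h⟩
    omega

lemma minf_succ (s : ℕ) (μ : Fin (s+2) → ℕ) (j : Fin (s+1)) :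
    sInf (↑((Finset.univ.filter (fun k : Fin (s+2) => j.succ ≤ k)).image μ) : Set ℕ)
      = sInf (↑((Finset.univ.filter (fun k : Fin (s+1) => j ≤ k)).image
          (fun k : Fin (s+1) => μ k.succ)) : Set ℕ) := by
  rw [filter_succ, Finset.map_eq_image, Finset.image_image]
  rfl

lemma filter_zero_le (s : ℕ) [NeZero s] :
    (Finset.univ.filter (fun k : Fin s => (0 : Fin s) ≤ k)) = Finset.univ := by
  apply Finset.filter_true_of_mem
  intro k _
  simp [Fin.le_def]

lemma aa_zero (s : ℕ) (μ : Fin (s+1) → ℕ) :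
    aa (s+1) μ 0 = sInf (↑(Finset.univ.image μ) : Set ℕ) := by
  rw [aa, dif_neg (by simp), filter_zero_le]
  simp

lemma key_s3 : ∀ (s : ℕ) (μ : Fin s → ℕ),
    (Finset.univ.val.map (aa s μ) : Multiset ℕ) = Finset.univ.val.map μ := by
  intro s
  induction s with
  | zero => intro μ; simp
  | succ n ih =>
    match n, ih with
    | 0, _ =>
      intro μ
      have h0 : aa 1 μ 0 = μ 0 := by
        rw [aa_zero]
        simp
      rw [map_univ_succ, map_univ_succ, h0]
      simp
    | (n+1), ih =>
      intro μ
      set ν : Fin (n+1) → ℕ := fun j => μ j.succ with hν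
      set m : ℕ := sInf (↑(Finset.univ.image ν) : Set ℕ) with hmdef
      have hne : (Finset.univ.image ν).Nonempty := ⟨ν 0, by simp⟩
      have hm : ∀ j : Fin (n+1), aa (n+2) μ j.succ
          = max (μ j.castSucc)
            (sInf (↑((Finset.univ.filter (fun k : Fin (n+1) => j ≤ k)).image ν) : Set ℕ)) := by
        intro j
        rw [aa, minf_succ, dif_pos (by simp [Fin.val_succ])]
        congr 2
      -- aa at 0
      have h0 : aa (n+2) μ 0 = min (μ 0) m := by
        rw [aa_zero]
        have himg : (Finset.univ.image μ) = insert (μ 0) (Finset.univ.image ν) := by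
          rw [Fin.univ_succ, Finset.cons_eq_insert, Finset.image_insert]
          congr 1
          rw [Finset.map_eq_image, Finset.image_image]
          rfl
        rw [himg, Finset.coe_insert, csInf_insert (OrderBot.bddBelow _) (by exact_mod_cast hne)]
      have h1 : aa (n+2) μ 1 = max (μ 0) m := by
        have := hm 0
        rw [filter_zero_le, Fin.succ_zero_eq_one] at this
        exact this
      have hν0 : aa (n+1) ν 0 = m := by
        rw [aa_zero]
      have htail : ∀ j : Fin n, aa (n+2) μ j.succ.succ = aa (n+1) ν j.succ := by
        intro j
        rw [hm, aa, dif_pos (by simp [Fin.val_succ])]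
        congr 2
      -- assemble
      rw [map_univ_succ, map_univ_succ (f := fun j : Fin (n+1) => aa (n+2) μ j.succ),
        map_univ_succ (f := μ), h0]
      rw [Fin.succ_zero_eq_one, h1]
      have hT : (Finset.univ.val.map (fun j : Fin n => aa (n+2) μ j.succ.succ) : Multiset ℕ)
          = Finset.univ.val.map (fun j : Fin n => aa (n+1) ν j.succ) := by
        apply Multiset.map_congr rfl
        intro j _
        exact htail j
      rw [hT]
      have hIH := ih ν
      rw [map_univ_succ (f := aa (n+1) ν), hν0] at hIH
      show _ = μ 0 ::ₘ Finset.univ.val.map ν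
      rw [← hIH]
      rcases le_total (μ 0) m with h | h
      · rw [min_eq_left h, max_eq_right h]
      · rw [min_eq_right h, max_eq_left h, Multiset.cons_swap]

theorem stmt_3 (s : ℕ) (hs : 1 ≤ s) (μ α : Fin s → ℕ)
    (hα : ∀ i : Fin s, α i =
      max (if h : 0 < (i : ℕ) then μ ⟨(i : ℕ) - 1, by omega⟩ else 0)
        (sInf (↑((Finset.univ.filter (fun j : Fin s => i ≤ j)).image μ) : Set ℕ))) :
    (Finset.univ.val.map α : Multiset ℕ) = Finset.univ.val.map μ := by
  have : α = aa s μ := funext fun i => hα i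
  rw [this, key_s3]
end

section
/- Let q ≥ 2 be a natural number and let a be even and b odd, both positive. Then gcd(q^a - 1, q^b + 1) = q^{gcd(a,b)} + 1. -/
lemma aux_dvd_pow_sub_one_iff {g q n : ℕ} (hq : 1 ≤ q) :
    g ∣ q ^ n - 1 ↔ (q : ZMod g) ^ n = 1 := by
  have h1 : 1 ≤ q ^ n := Nat.one_le_pow _ _ hq
  rw [← Nat.modEq_iff_dvd' h1, Nat.ModEq.comm, ← ZMod.natCast_eq_natCast_iff]
  push_cast
  rfl

lemma aux_dvd_gcd_pow {g q m n : ℕ} (hq : 1 ≤ q) (hm : g ∣ q ^ m - 1)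
    (hn : g ∣ q ^ n - 1) : g ∣ q ^ (Nat.gcd m n) - 1 := by
  rw [aux_dvd_pow_sub_one_iff hq] at hm hn ⊢
  have h1 : orderOf (q : ZMod g) ∣ m := orderOf_dvd_of_pow_eq_one hm
  have h2 : orderOf (q : ZMod g) ∣ n := orderOf_dvd_of_pow_eq_one hn
  exact orderOf_dvd_iff_pow_eq_one.mp (Nat.dvd_gcd h1 h2)

theorem stmt_5 (q a b : ℕ) (hq : 2 ≤ q) (ha : 0 < a) (hb : 0 < b)
    (hae : Even a) (hbo : Odd b) :
    Nat.gcd (q ^ a - 1) (q ^ b + 1) = q ^ (Nat.gcd a b) + 1 := by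
  set d := Nat.gcd a b with hd
  set g := Nat.gcd (q ^ a - 1) (q ^ b + 1) with hg
  have hq1 : 1 ≤ q := by omega
  have hdpos : 0 < d := Nat.gcd_pos_of_pos_left _ ha
  have hdb : d ∣ b := Nat.gcd_dvd_right a b
  have hda : d ∣ a := Nat.gcd_dvd_left a b
  have hdo : Odd d := hbo.of_dvd_nat hdb
  -- 2d ∣ a
  have h2d : 2 * d ∣ a :=
    (Nat.Coprime.mul_dvd_of_dvd_of_dvd (Nat.coprime_two_left.mpr hdo)
      hae.two_dvd hda)
  -- b / d is odd
  obtain ⟨m, hmb⟩ := hdb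
  have hmo : Odd m := by
    rcases Nat.even_or_odd m with h | h
    · exfalso; rw [hmb] at hbo
      exact (Nat.not_even_iff_odd.mpr hbo) (h.mul_left d)
    · exact h
  -- q^d + 1 ∣ q^b + 1
  have hkey1 : q ^ d + 1 ∣ q ^ b + 1 := by
    have := Odd.nat_add_dvd_pow_add_pow (q ^ d) 1 hmo
    simpa [hmb, one_pow, ← pow_mul] using this
  -- q^d + 1 ∣ q^a - 1
  have hsq : q ^ d + 1 ∣ q ^ (2 * d) - 1 := by
    have h : q ^ (2 * d) - 1 = (q ^ d) ^ 2 - 1 ^ 2 := by ring_nf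
    rw [h, Nat.sq_sub_sq]
    exact dvd_mul_right _ _
  have hkey2 : q ^ d + 1 ∣ q ^ a - 1 := by
    refine hsq.trans ?_
    obtain ⟨k, hk⟩ := h2d
    have := Nat.sub_dvd_pow_sub_pow (q ^ (2 * d)) 1 k
    simpa [hk, one_pow, ← pow_mul] using this
  -- so q^d + 1 ∣ g
  have hdvdg : q ^ d + 1 ∣ g := Nat.dvd_gcd hkey2 hkey1
  -- g ∣ q^(2d) - 1
  have hga : g ∣ q ^ a - 1 := Nat.gcd_dvd_left _ _
  have hgb : g ∣ q ^ b + 1 := Nat.gcd_dvd_right _ _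
  have hg2b : g ∣ q ^ (2 * b) - 1 := by
    refine hgb.trans ?_
    have h : q ^ (2 * b) - 1 = (q ^ b) ^ 2 - 1 ^ 2 := by ring_nf
    rw [h, Nat.sq_sub_sq]
    exact dvd_mul_right _ _
  have hgcdab : Nat.gcd a (2 * b) = 2 * d := by
    obtain ⟨a', ha'⟩ := hae
    have ha2 : a = 2 * a' := by omega
    rw [ha2, Nat.gcd_mul_left, hd, ha2]
    congr 1
    rw [Nat.Coprime.gcd_mul_left_cancel a' (Nat.coprime_two_left.mpr hbo)]
  have hg2d : g ∣ q ^ (2 * d) - 1 := by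
    have := aux_dvd_gcd_pow hq1 hga hg2b
    rwa [hgcdab] at this
  -- gcd (g) (q^d - 1) ∣ 2
  have hgcd2 : Nat.gcd g (q ^ d - 1) ∣ 2 := by
    have h1 : Nat.gcd g (q ^ d - 1) ∣ q ^ b + 1 := (Nat.gcd_dvd_left _ _).trans hgb
    have h2 : Nat.gcd g (q ^ d - 1) ∣ q ^ b - 1 := by
      refine (Nat.gcd_dvd_right _ _).trans ?_
      have := Nat.sub_dvd_pow_sub_pow (q ^ d) 1 m
      simpa [hmb, one_pow, ← pow_mul] using this
    have hqb : 1 ≤ q ^ b := Nat.one_le_pow _ _ hq1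
    have : (q ^ b + 1) - (q ^ b - 1) = 2 := by omega
    calc Nat.gcd g (q ^ d - 1) ∣ (q ^ b + 1) - (q ^ b - 1) := Nat.dvd_sub h1 h2
    _ = 2 := this
  -- g ∣ 2 * (q^d + 1)
  have hfac : q ^ (2 * d) - 1 = (q ^ d - 1) * (q ^ d + 1) := by
    have h : q ^ (2 * d) = (q ^ d) ^ 2 := by ring
    have hqd : 1 ≤ q ^ d := Nat.one_le_pow _ _ hq1
    have hqd2 : 1 ≤ q ^ (2 * d) := Nat.one_le_pow _ _ hq1
    zify [hqd, hqd2]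
    ring
  have hg2qd : g ∣ 2 * (q ^ d + 1) := by
    set c := Nat.gcd g (q ^ d - 1) with hc
    have hgpos : 0 < g := Nat.gcd_pos_of_pos_right _ (by positivity)
    have hcpos : 0 < c := Nat.gcd_pos_of_pos_left _ hgpos
    have hcop : Nat.Coprime (g / c) ((q ^ d - 1) / c) :=
      Nat.coprime_div_gcd_div_gcd hcpos
    have hcg : c ∣ g := Nat.gcd_dvd_left _ _
    have hcq : c ∣ q ^ d - 1 := Nat.gcd_dvd_right _ _
    have hdvd : g / c ∣ ((q ^ d - 1) / c) * (q ^ d + 1) := by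
      have h1 : g ∣ (q ^ d - 1) * (q ^ d + 1) := hfac ▸ hg2d
      obtain ⟨e, he⟩ := hcg
      obtain ⟨f, hf⟩ := hcq
      rw [he, hf, Nat.mul_div_cancel_left _ hcpos, Nat.mul_div_cancel_left _ hcpos]
      rw [he, hf] at h1
      rw [mul_assoc] at h1
      exact (Nat.mul_dvd_mul_iff_left hcpos).mp h1
    have := hcop.dvd_of_dvd_mul_left hdvd
    obtain ⟨e, he⟩ := hcg
    calc g = c * (g / c) := by rw [he, Nat.mul_div_cancel_left _ hcpos]
    _ ∣ c * (q ^ d + 1) := Nat.mul_dvd_mul_left c this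
    _ ∣ 2 * (q ^ d + 1) := Nat.mul_dvd_mul_right hgcd2 _
  -- conclude
  obtain ⟨t, ht⟩ := hdvdg
  have hqdpos : 0 < q ^ d + 1 := Nat.succ_le_succ (Nat.zero_le _)
  have htd2 : t ∣ 2 := by
    rw [ht, mul_comm 2 (q ^ d + 1)] at hg2qd
    exact (Nat.mul_dvd_mul_iff_left hqdpos).mp hg2qd
  have ht1 : t = 1 := by
    rcases (Nat.dvd_prime Nat.prime_two).mp htd2 with h | h
    · exact h
    exfalso
    subst h
    -- 2 * (q^d + 1) ∣ q^b + 1, contradiction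
    have h2dvd : 2 * (q ^ d + 1) ∣ q ^ b + 1 := by
      rw [ht, mul_comm] at hgb; exact hgb
    rcases Nat.even_or_odd q with hqe | hqo
    · have h2q : 2 ∣ q ^ b := dvd_pow hqe.two_dvd hb.ne'
      have h21 : 2 ∣ q ^ b + 1 := dvd_trans (Dvd.intro _ rfl) h2dvd
      omega
    · set x : ℤ := (q : ℤ) ^ d with hx
      set S : ℤ := ∑ i ∈ Finset.range m, (-x) ^ i with hS
      have hgeo : S * (x + 1) = x ^ m + 1 := by
        have h := geom_sum_mul (-x) m
        rw [hmo.neg_pow] at h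
        linear_combination -h
      have hq2 : (q : ZMod 2) = 1 := by
        rw [← ZMod.natCast_mod, Nat.odd_iff.mp hqo, Nat.cast_one]
      have hm2 : (m : ZMod 2) = 1 := by
        rw [← ZMod.natCast_mod, Nat.odd_iff.mp hmo, Nat.cast_one]
      have hScast : (S : ZMod 2) = 1 := by
        rw [hS, hx]
        push_cast [hq2]
        simp [CharTwo.neg_eq, hm2]
      have hSo : ¬ (2 : ℤ) ∣ S := by
        intro h
        have h0 : (S : ZMod 2) = 0 := by
          obtain ⟨k, hk⟩ := h
          rw [hk]
          push_cast
          have h2z : (2 : ZMod 2) = 0 := by decide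
          simp [h2z]
        rw [hScast] at h0
        exact one_ne_zero h0
      have hdvdZ : ((2 * (q ^ d + 1) : ℕ) : ℤ) ∣ ((q ^ b + 1 : ℕ) : ℤ) :=
        Int.natCast_dvd_natCast.mpr h2dvd
      push_cast at hdvdZ
      have hbx : (q : ℤ) ^ b = x ^ m := by rw [hmb, hx, pow_mul]
      rw [hbx, ← hgeo] at hdvdZ
      have hx1 : x + 1 ≠ 0 := by positivity
      have hdvd2 : 2 * (x + 1) ∣ S * (x + 1) := hdvdZ
      exact hSo ((mul_dvd_mul_iff_right hx1).mp hdvd2)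
  rw [ht, ht1, mul_one]
end

section
/- Let q ≥ 2 be a natural number and let a, b be odd positive natural numbers. Then gcd(q^a + 1, q^b + 1) = q^{gcd(a,b)} + 1. -/
-- auxiliary: the classic gcd formula for q^m - 1
theorem aux_gcd_pow_sub_one (q : ℕ) (m n : ℕ) :
    Nat.gcd (q ^ m - 1) (q ^ n - 1) = q ^ (Nat.gcd m n) - 1 := by
  induction m, n using Nat.gcd.induction with
  | H0 n => simp
  | H1 m n hm ih =>
    conv_rhs => rw [Nat.gcd_rec m n]
    rw [← ih]
    -- key equation: q^n - 1 = q^(n%m) * (q^(m*(n/m)) - 1) + (q^(n%m) - 1)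
    rcases Nat.eq_zero_or_pos q with rfl | hq
    · have hz : ∀ k : ℕ, (0 : ℕ) ^ k - 1 = 0 := by
        intro k; cases k <;> simp
      simp [hz]
    have hA : 1 ≤ q ^ (m * (n / m)) := Nat.one_le_pow _ _ hq
    have hB : 1 ≤ q ^ (n % m) := Nat.one_le_pow _ _ hq
    have hqn : q ^ n = q ^ (m * (n / m)) * q ^ (n % m) := by
      rw [← pow_add]; congr 1; exact (Nat.div_add_mod n m).symm
    have key : q ^ n - 1 = q ^ (n % m) * (q ^ (m * (n / m)) - 1) + (q ^ (n % m) - 1) := by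
      have h1 : q ^ (n % m) * q ^ (m * (n / m)) = q ^ n := by
        rw [← pow_add]; congr 1; rw [Nat.add_comm]; exact Nat.div_add_mod n m
      have h2 : q ^ (n % m) ≤ q ^ n := by
        rw [← h1]; exact Nat.le_mul_of_pos_right _ hA
      rw [Nat.mul_sub, mul_one, h1]
      omega
    have hdvd : q ^ m - 1 ∣ q ^ (m * (n / m)) - 1 := Nat.pow_sub_one_dvd_pow_sub_one q (Nat.dvd_mul_right m (n / m))
    apply Nat.dvd_antisymm
    · apply Nat.dvd_gcd
      · have h1 : Nat.gcd (q ^ m - 1) (q ^ n - 1) ∣ q ^ (n % m) * (q ^ (m * (n / m)) - 1) :=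
          ((Nat.gcd_dvd_left _ _).trans hdvd).mul_left _
        have h2 : Nat.gcd (q ^ m - 1) (q ^ n - 1) ∣ q ^ n - 1 := Nat.gcd_dvd_right _ _
        have h3 : q ^ (n % m) - 1 = (q ^ n - 1) - q ^ (n % m) * (q ^ (m * (n / m)) - 1) := by omega
        rw [h3]
        exact Nat.dvd_sub h2 h1
      · exact Nat.gcd_dvd_left _ _
    · apply Nat.dvd_gcd
      · exact Nat.gcd_dvd_right _ _
      · rw [key]
        exact Nat.dvd_add ((Nat.gcd_dvd_right _ _).trans hdvd |>.mul_left _) (Nat.gcd_dvd_left _ _)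

theorem aux_odd_cofactor (q d r : ℕ) (hq : Odd q) (hr : Odd r)
    (h : 2 * (q ^ d + 1) ∣ q ^ (d * r) + 1) : False := by
  set x : ℤ := (q : ℤ) ^ d with hx
  set c : ℤ := ∑ i ∈ Finset.range r, x ^ i * (-1 : ℤ) ^ (r - 1 - i) with hc
  have hmul : c * (x + 1) = x ^ r + 1 := by
    have h₁ := geom_sum₂_mul x (-1 : ℤ) r
    rw [Odd.neg_pow hr 1, sub_neg_eq_add, sub_neg_eq_add, one_pow] at h₁
    exact h₁
  have hcodd : ¬ (2 : ℤ) ∣ c := by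
    intro h2
    have hcast : ((c : ℤ) : ZMod 2) = 0 := by
      exact_mod_cast (ZMod.intCast_zmod_eq_zero_iff_dvd c 2).mpr h2
    have hq1 : (q : ZMod 2) = 1 := by
      have := Nat.odd_iff.mp hq
      rw [← ZMod.natCast_mod, this]; simp
    rw [hc, hx] at hcast
    push_cast at hcast
    rw [hq1] at hcast
    simp only [one_pow, one_mul] at hcast
    have hneg : (-1 : ZMod 2) = 1 := by decide
    simp only [hneg, one_pow] at hcast
    rw [Finset.sum_const, Finset.card_range, nsmul_eq_mul, mul_one] at hcast
    have : (r : ZMod 2) = 1 := by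
      have := Nat.odd_iff.mp hr
      rw [← ZMod.natCast_mod, this]; simp
    rw [this] at hcast
    exact one_ne_zero hcast
  apply hcodd
  have hz : (2 * ((q : ℤ) ^ d + 1)) ∣ ((q : ℤ) ^ (d * r) + 1) := by exact_mod_cast h
  rw [pow_mul] at hz
  rw [← hx, ← hmul] at hz
  obtain ⟨t, hT⟩ := hz
  have hx1 : (x + 1 : ℤ) ≠ 0 := by positivity
  refine ⟨t, mul_left_cancel₀ hx1 ?_⟩
  rw [mul_comm (x+1) c, hT]; ring

theorem stmt_6 (q a b : ℕ) (hq : 2 ≤ q) (ha : 0 < a) (hb : 0 < b)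
    (hao : Odd a) (hbo : Odd b) :
    Nat.gcd (q ^ a + 1) (q ^ b + 1) = q ^ (Nat.gcd a b) + 1 := by
  set d := Nat.gcd a b with hd
  set g := Nat.gcd (q ^ a + 1) (q ^ b + 1) with hg
  have hd0 : 0 < d := Nat.gcd_pos_of_pos_left b ha
  have hstep : ∀ c : ℕ, Odd c → d ∣ c → q ^ d + 1 ∣ q ^ c + 1 := by
    intro c hc hdc
    obtain ⟨r, rfl⟩ := hdc
    have hr : Odd r := (Nat.odd_mul.mp hc).2
    have := Odd.nat_add_dvd_pow_add_pow (q ^ d) 1 hr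
    simpa [pow_mul] using this
  have h1 := hstep a hao (Nat.gcd_dvd_left a b)
  have h2 := hstep b hbo (Nat.gcd_dvd_right a b)
  have ht : q ^ d + 1 ∣ g := Nat.dvd_gcd h1 h2
  have hsq : ∀ c : ℕ, q ^ (2 * c) - 1 = (q ^ c + 1) * (q ^ c - 1) := by
    intro c
    rw [mul_comm 2 c, pow_mul]
    have := Nat.sq_sub_sq (q ^ c) 1
    simpa [sq] using this
  have hga : g ∣ q ^ (2 * a) - 1 := by
    rw [hsq a]; exact (Nat.gcd_dvd_left _ _).mul_right _
  have hgb : g ∣ q ^ (2 * b) - 1 := by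
    rw [hsq b]; exact (Nat.gcd_dvd_right _ _).mul_right _
  have hg2 : g ∣ (q ^ d + 1) * (q ^ d - 1) := by
    have := Nat.dvd_gcd hga hgb
    rw [aux_gcd_pow_sub_one, Nat.gcd_mul_left, ← hd, hsq d] at this
    exact this
  obtain ⟨k, hk⟩ := ht
  have hqd0 : q ^ d + 1 ≠ 0 := by positivity
  have hkdvd : k ∣ q ^ d - 1 := by
    rw [hk] at hg2
    exact (mul_dvd_mul_iff_left hqd0).mp hg2
  have hkg : k ∣ g := Dvd.intro_left _ hk.symm
  have hka : k ∣ q ^ a + 1 := hkg.trans (Nat.gcd_dvd_left _ _)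
  have hka' : k ∣ q ^ a - 1 := by
    refine hkdvd.trans ?_
    have h := Nat.pow_sub_one_dvd_pow_sub_one q (Nat.dvd_mul_right d (a / d))
    rwa [Nat.mul_div_cancel' (Nat.gcd_dvd_left a b)] at h
  have hqa1 : 1 ≤ q ^ a := Nat.one_le_pow _ _ (by omega)
  have hk2 : k ∣ 2 := by
    have := Nat.dvd_sub hka hka'
    have he : q ^ a + 1 - (q ^ a - 1) = 2 := by omega
    rwa [he] at this
  rcases (Nat.dvd_prime Nat.prime_two).mp hk2 with rfl | rfl
  · rw [hk, mul_one]
  · exfalso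
    have h2g : 2 * (q ^ d + 1) ∣ q ^ a + 1 := by
      have : (q ^ d + 1) * 2 ∣ q ^ a + 1 := hk ▸ Nat.gcd_dvd_left _ _
      rwa [mul_comm] at this
    rcases Nat.even_or_odd q with hqe | hqo
    · have h2q : 2 ∣ q ^ a := (hqe.two_dvd).pow ha.ne'  -- maybe wrong name
      have : 2 ∣ q ^ a + 1 := dvd_trans ⟨q ^ d + 1, by ring⟩ h2g
      omega
    · obtain ⟨r, hr⟩ := Nat.gcd_dvd_left a b
      have hrodd : Odd r := (Nat.odd_mul.mp (hr ▸ hao)).2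
      exact aux_odd_cofactor q d r hqo hrodd (hr ▸ h2g)
end

section
/- Let s ≥ 1 and m₁, …, m_s be positive natural numbers. For 0 ≤ k ≤ s let δ_k = gcd over all k-element subsets {i₁ < … < i_k} of {1,…,s} of the products m_{i₁}·…·m_{i_k} (δ₀ = 1). Then δ_k/δ_{k-1} = lcm over all (s-k+1)-element subsets {i₁ < … < i_{s-k+1}} of gcd(m_{i₁}, …, m_{i_{s-k+1}}). -/
open Finset

/-- A strictly monotone map between `Fin` types grows at least like the identity. -/
private lemma aux_strictMono_le {k s : ℕ} {φ : Fin k → Fin s} (h : StrictMono φ) :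
    ∀ (j : ℕ) (hj : j < k), j ≤ (φ ⟨j, hj⟩ : ℕ) := by
  intro j
  induction j with
  | zero => intro _; exact Nat.zero_le _
  | succ n ih =>
    intro hj
    have h1 : φ ⟨n, Nat.lt_of_succ_lt hj⟩ < φ ⟨n + 1, hj⟩ := h (by simp [Fin.lt_def])
    have h2 := ih (Nat.lt_of_succ_lt hj)
    have h1' : (φ ⟨n, Nat.lt_of_succ_lt hj⟩ : ℕ) < (φ ⟨n + 1, hj⟩ : ℕ) := h1
    omega

/-- `inf'` with a default value 0 for the empty set. -/
private def inf0 {s : ℕ} (f : Fin s → ℕ) (T : Finset (Fin s)) : ℕ :=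
  if h : T.Nonempty then T.inf' h f else 0

private lemma filter_lt_eq_image {s k : ℕ} (hks : k ≤ s) :
    (univ : Finset (Fin s)).filter (fun i : Fin s => (i : ℕ) < k)
      = (univ : Finset (Fin k)).image (Fin.castLE hks) := by
  ext i
  simp only [mem_filter, mem_univ, true_and, mem_image]
  constructor
  · intro hi; exact ⟨⟨i, hi⟩, rfl⟩
  · rintro ⟨j, rfl⟩; exact j.2

private lemma card_filter_lt {s k : ℕ} (hks : k ≤ s) :
    ((univ : Finset (Fin s)).filter (fun i : Fin s => (i : ℕ) < k)).card = k := by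
  rw [filter_lt_eq_image hks, card_image_of_injective _ (Fin.castLE_injective hks)]
  simp

private lemma card_filter_ge_aux {s c : ℕ} (hcs : c ≤ s) :
    ((univ : Finset (Fin s)).filter (fun i : Fin s => c ≤ (i : ℕ))).card = s - c := by
  have h := Finset.card_filter_add_card_filter_not
    (s := (univ : Finset (Fin s))) (p := fun i : Fin s => (i : ℕ) < c)
  have h1 := card_filter_lt hcs
  have h2 : (univ : Finset (Fin s)).filter (fun i : Fin s => ¬ (i : ℕ) < c)
      = (univ : Finset (Fin s)).filter (fun i : Fin s => c ≤ (i : ℕ)) := by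
    apply filter_congr; intro i _; simp [Nat.not_lt]
  rw [h1, h2] at h
  simp only [card_univ, Fintype.card_fin] at h
  omega

/-- Lemma A: the minimum over `k`-subsets of the sum, for a monotone `g`, is the sum of the
first `k` values. -/
private lemma lemA {s k : ℕ} (hks : k ≤ s) {g : Fin s → ℕ} (hg : Monotone g)
    (hne : (powersetCard k (univ : Finset (Fin s))).Nonempty) :
    (powersetCard k (univ : Finset (Fin s))).inf' hne (fun T => ∑ i ∈ T, g i)
      = ∑ j : Fin k, g (Fin.castLE hks j) := by
  apply le_antisymm
  · have hmem : (univ : Finset (Fin k)).image (Fin.castLE hks)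
        ∈ powersetCard k (univ : Finset (Fin s)) := by
      rw [mem_powersetCard]
      refine ⟨subset_univ _, ?_⟩
      rw [card_image_of_injective _ (Fin.castLE_injective hks)]; simp
    refine le_trans (inf'_le _ hmem) ?_
    rw [Finset.sum_image (fun a _ b _ h => Fin.castLE_injective hks h)]
  · apply le_inf'
    intro T hT
    rw [mem_powersetCard] at hT
    obtain ⟨-, hcard⟩ := hT
    set φ := T.orderEmbOfFin hcard with hφ
    have hTeq : T = (univ : Finset (Fin k)).image φ := by
      ext i
      simp only [mem_image, mem_univ, true_and]
      constructor
      · intro hi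
        have : i ∈ Set.range φ := by rw [Finset.range_orderEmbOfFin]; exact hi
        obtain ⟨j, hj⟩ := this; exact ⟨j, hj⟩
      · rintro ⟨j, rfl⟩; exact Finset.orderEmbOfFin_mem T hcard j
    rw [hTeq, Finset.sum_image (fun a _ b _ h => φ.injective h)]
    apply Finset.sum_le_sum
    intro j _
    apply hg
    have := aux_strictMono_le φ.strictMono j j.2
    simp only [Fin.le_def, Fin.coe_castLE]
    simpa using this

/-- Lemma B: the maximum over `(s-k+1)`-subsets of the minimum, for a monotone `g`, is the
`k`-th smallest value. -/
private lemma lemB {s k : ℕ} (hk1 : 1 ≤ k) (hks : k ≤ s) {g : Fin s → ℕ} (hg : Monotone g)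
    (hne : (powersetCard (s - k + 1) (univ : Finset (Fin s))).Nonempty) :
    (powersetCard (s - k + 1) (univ : Finset (Fin s))).sup' hne (inf0 g)
      = g ⟨k - 1, by omega⟩ := by
  apply le_antisymm
  · apply sup'_le
    intro T hT
    rw [mem_powersetCard] at hT
    obtain ⟨-, hcard⟩ := hT
    have hTne : T.Nonempty := card_pos.mp (by omega)
    rw [inf0, dif_pos hTne]
    -- T contains an element with value ≤ k - 1
    have hex : ∃ i ∈ T, (i : ℕ) ≤ k - 1 := by
      by_contra hcon
      push_neg at hcon
      have hsub : T ⊆ (univ : Finset (Fin s)).filter (fun i : Fin s => k ≤ (i : ℕ)) := by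
        intro i hi
        simp only [mem_filter, mem_univ, true_and]
        have := hcon i hi; omega
      have := Finset.card_le_card hsub
      rw [card_filter_ge_aux hks, hcard] at this
      omega
    obtain ⟨i, hiT, hile⟩ := hex
    refine le_trans (inf'_le _ hiT) (hg ?_)
    simp only [Fin.le_def]
    exact hile
  · set T₀ := (univ : Finset (Fin s)).filter (fun i : Fin s => k - 1 ≤ (i : ℕ)) with hT₀
    have hmem : T₀ ∈ powersetCard (s - k + 1) (univ : Finset (Fin s)) := by
      rw [mem_powersetCard]
      refine ⟨subset_univ _, ?_⟩
      rw [hT₀, card_filter_ge_aux (by omega)]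
      omega
    refine le_trans ?_ (le_sup' _ hmem)
    have hT₀ne : T₀.Nonempty := ⟨⟨k - 1, by omega⟩, by rw [hT₀]; exact mem_filter.mpr ⟨mem_univ _, le_rfl⟩⟩
    rw [inf0, dif_pos hT₀ne]
    apply le_inf'
    intro i hi
    rw [hT₀, mem_filter] at hi
    exact hg hi.2

private lemma image_perm_powersetCard {s : ℕ} (σ : Equiv.Perm (Fin s)) (c : ℕ) :
    (powersetCard c (univ : Finset (Fin s))).image (fun T => T.image σ)
      = powersetCard c (univ : Finset (Fin s)) := by
  ext T
  simp only [mem_image, mem_powersetCard, subset_univ, true_and]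
  constructor
  · rintro ⟨U, hU, rfl⟩
    rw [card_image_of_injective _ σ.injective]; exact hU
  · intro hT
    refine ⟨T.image σ.symm, ?_, ?_⟩
    · rw [card_image_of_injective _ σ.symm.injective]; exact hT
    · rw [Finset.image_image]
      have : (σ : Fin s → Fin s) ∘ (σ.symm : Fin s → Fin s) = id := by
        funext x; simp
      rw [this, Finset.image_id]

/-- The core combinatorial identity, for an arbitrary function `f : Fin s → ℕ`. -/
private lemma core {s k : ℕ} (hk1 : 1 ≤ k) (hks : k ≤ s) (f : Fin s → ℕ)
    (h1 : (powersetCard k (univ : Finset (Fin s))).Nonempty)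
    (h2 : (powersetCard (k - 1) (univ : Finset (Fin s))).Nonempty)
    (h3 : (powersetCard (s - k + 1) (univ : Finset (Fin s))).Nonempty) :
    (powersetCard k (univ : Finset (Fin s))).inf' h1 (fun T => ∑ i ∈ T, f i)
      = (powersetCard (k - 1) (univ : Finset (Fin s))).inf' h2 (fun T => ∑ i ∈ T, f i)
        + (powersetCard (s - k + 1) (univ : Finset (Fin s))).sup' h3 (inf0 f) := by
  classical
  set σ := Tuple.sort f with hσ
  have hg : Monotone (f ∘ σ) := Tuple.monotone_sort f
  set g : Fin s → ℕ := f ∘ σ with hgdef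
  -- reindexing: sums
  have hsum : ∀ (c : ℕ) (hc : (powersetCard c (univ : Finset (Fin s))).Nonempty),
      (powersetCard c (univ : Finset (Fin s))).inf' hc (fun T => ∑ i ∈ T, f i)
        = (powersetCard c (univ : Finset (Fin s))).inf' hc (fun T => ∑ i ∈ T, g i) := by
    intro c hc
    calc (powersetCard c (univ : Finset (Fin s))).inf' hc (fun T => ∑ i ∈ T, f i)
        = ((powersetCard c (univ : Finset (Fin s))).image (fun T => T.image σ)).inf'
            (by rw [image_perm_powersetCard]; exact hc) (fun T => ∑ i ∈ T, f i) :=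
          inf'_congr hc (image_perm_powersetCard σ c).symm (fun _ _ => rfl)
      _ = (powersetCard c (univ : Finset (Fin s))).inf' hc
            ((fun T => ∑ i ∈ T, f i) ∘ (fun T => T.image σ)) := inf'_image _ _
      _ = (powersetCard c (univ : Finset (Fin s))).inf' hc (fun T => ∑ i ∈ T, g i) := by
          apply inf'_congr hc rfl
          intro T _
          simp only [Function.comp_apply]
          rw [Finset.sum_image (fun a _ b _ h => σ.injective h)]
          rfl
  -- reindexing: inf0
  have hinf : (powersetCard (s - k + 1) (univ : Finset (Fin s))).sup' h3 (inf0 f)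
      = (powersetCard (s - k + 1) (univ : Finset (Fin s))).sup' h3 (inf0 g) := by
    calc (powersetCard (s - k + 1) (univ : Finset (Fin s))).sup' h3 (inf0 f)
        = ((powersetCard (s - k + 1) (univ : Finset (Fin s))).image (fun T => T.image σ)).sup'
            (by rw [image_perm_powersetCard]; exact h3) (inf0 f) :=
          sup'_congr h3 (image_perm_powersetCard σ (s - k + 1)).symm (fun _ _ => rfl)
      _ = (powersetCard (s - k + 1) (univ : Finset (Fin s))).sup' h3
            (inf0 f ∘ (fun T => T.image σ)) := sup'_image _ _
      _ = (powersetCard (s - k + 1) (univ : Finset (Fin s))).sup' h3 (inf0 g) := by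
          apply sup'_congr h3 rfl
          intro T _
          simp only [Function.comp_apply, inf0]
          by_cases hT : T.Nonempty
          · rw [dif_pos hT, dif_pos (hT.image σ)]
            rw [inf'_image (hT.image σ)]
          · rw [dif_neg hT, dif_neg (by simpa using hT)]
  rw [hsum k h1, hsum (k - 1) h2, hinf]
  rw [lemA hks hg h1, lemA (by omega) hg h2, lemB hk1 hks hg h3]
  obtain ⟨n, rfl⟩ : ∃ n, k = n + 1 := ⟨k - 1, by omega⟩
  simp only [Nat.add_sub_cancel]
  rw [Fin.sum_univ_castSucc]
  congr 1

/-- Factorization of a `Finset.gcd` of nonzero naturals. -/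
private lemma factorization_finsetGcd {α : Type*} {S : Finset α} (hS : S.Nonempty) {g : α → ℕ}
    (hg : ∀ i ∈ S, g i ≠ 0) (p : ℕ) :
    (S.gcd g).factorization p = S.inf' hS (fun i => (g i).factorization p) := by
  classical
  induction hS using Finset.Nonempty.cons_induction with
  | singleton a => simp
  | cons a S ha hS ih =>
    have hga : g a ≠ 0 := hg a (mem_cons_self a S)
    have hgS : ∀ i ∈ S, g i ≠ 0 := fun i hi => hg i (mem_cons.mpr (Or.inr hi))
    have hSgcd : S.gcd g ≠ 0 := by
      intro h
      obtain ⟨b, hb⟩ := hS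
      exact hgS b hb (gcd_eq_zero_iff.mp h b hb)
    have hrw : (Finset.cons a S ha).gcd g = Nat.gcd (g a) (S.gcd g) := by
      rw [Finset.cons_eq_insert, Finset.gcd_insert]
      rfl
    rw [hrw, inf'_cons hS, ← ih hgS, Nat.factorization_gcd hga hSgcd]
    exact Finsupp.inf_apply _ _ _

private lemma finsetLcm_ne_zero {α : Type*} {S : Finset α} {g : α → ℕ}
    (hg : ∀ i ∈ S, g i ≠ 0) : S.lcm g ≠ 0 := by
  classical
  induction S using Finset.cons_induction with
  | empty => simp
  | cons a S ha ih =>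
    have hrw : (Finset.cons a S ha).lcm g = Nat.lcm (g a) (S.lcm g) := by
      rw [Finset.cons_eq_insert, Finset.lcm_insert]
      rfl
    rw [hrw]
    exact Nat.lcm_ne_zero (hg a (mem_cons_self a S))
      (ih fun i hi => hg i (mem_cons.mpr (Or.inr hi)))

/-- Factorization of a `Finset.lcm` of nonzero naturals. -/
private lemma factorization_finsetLcm {α : Type*} {S : Finset α} (hS : S.Nonempty) {g : α → ℕ}
    (hg : ∀ i ∈ S, g i ≠ 0) (p : ℕ) :
    (S.lcm g).factorization p = S.sup' hS (fun i => (g i).factorization p) := by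
  classical
  induction hS using Finset.Nonempty.cons_induction with
  | singleton a => simp
  | cons a S ha hS ih =>
    have hga : g a ≠ 0 := hg a (mem_cons_self a S)
    have hgS : ∀ i ∈ S, g i ≠ 0 := fun i hi => hg i (mem_cons.mpr (Or.inr hi))
    have hrw : (Finset.cons a S ha).lcm g = Nat.lcm (g a) (S.lcm g) := by
      rw [Finset.cons_eq_insert, Finset.lcm_insert]
      rfl
    rw [hrw, sup'_cons hS, ← ih hgS, Nat.factorization_lcm hga (finsetLcm_ne_zero hgS)]
    exact Finsupp.sup_apply _ _ _

theorem stmt_10 (s : ℕ) (hs : 1 ≤ s) (m : Fin s → ℕ) (hm : ∀ i, 0 < m i)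
    (δ : ℕ → ℕ)
    (hδ : ∀ k, δ k = (Finset.powersetCard k (Finset.univ : Finset (Fin s))).gcd
      (fun T => ∏ i ∈ T, m i)) :
    ∀ k, 1 ≤ k → k ≤ s →
      δ k / δ (k - 1) =
        (Finset.powersetCard (s - k + 1) (Finset.univ : Finset (Fin s))).lcm
          (fun T => T.gcd m) := by
  intro k hk1 hks
  classical
  have hcard : (univ : Finset (Fin s)).card = s := by simp
  have h1 : (powersetCard k (univ : Finset (Fin s))).Nonempty :=
    powersetCard_nonempty.mpr (by omega)
  have h2 : (powersetCard (k - 1) (univ : Finset (Fin s))).Nonempty :=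
    powersetCard_nonempty.mpr (by omega)
  have h3 : (powersetCard (s - k + 1) (univ : Finset (Fin s))).Nonempty :=
    powersetCard_nonempty.mpr (by omega)
  have hprod : ∀ (c : ℕ) (T : Finset (Fin s)), T ∈ powersetCard c (univ : Finset (Fin s)) →
      (∏ i ∈ T, m i) ≠ 0 := by
    intro c T _
    exact (Finset.prod_pos fun i _ => hm i).ne'
  -- δ j ≠ 0 for any j ≤ s
  have hδne : ∀ (c : ℕ), (powersetCard c (univ : Finset (Fin s))).Nonempty → δ c ≠ 0 := by
    intro c hc h
    rw [hδ c] at h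
    obtain ⟨T, hT⟩ := hc
    exact hprod c T hT (gcd_eq_zero_iff.mp h T hT)
  have hδk : δ k ≠ 0 := hδne k h1
  have hδk1 : δ (k - 1) ≠ 0 := hδne (k - 1) h2
  -- T.gcd m ≠ 0 for nonempty T
  have hgcdne : ∀ T ∈ powersetCard (s - k + 1) (univ : Finset (Fin s)), T.gcd m ≠ 0 := by
    intro T hT h
    rw [mem_powersetCard] at hT
    have hTne : T.Nonempty := card_pos.mp (by omega)
    obtain ⟨i, hi⟩ := hTne
    exact (hm i).ne' (gcd_eq_zero_iff.mp h i hi)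
  set L := (powersetCard (s - k + 1) (univ : Finset (Fin s))).lcm (fun T => T.gcd m) with hL
  have hLne : L ≠ 0 := finsetLcm_ne_zero hgcdne
  have key : δ k = δ (k - 1) * L := by
    apply Nat.factorization_inj hδk (Set.mem_setOf_eq ▸ mul_ne_zero hδk1 hLne)
    rw [Nat.factorization_mul hδk1 hLne]
    ext p
    rw [Finsupp.add_apply]
    have hδfact : ∀ (c : ℕ) (hc : (powersetCard c (univ : Finset (Fin s))).Nonempty),
        (δ c).factorization p = (powersetCard c (univ : Finset (Fin s))).inf' hc
          (fun T => ∑ i ∈ T, (m i).factorization p) := by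
      intro c hc
      rw [hδ c, factorization_finsetGcd hc (hprod c) p]
      apply inf'_congr hc rfl
      intro T hT
      rw [Nat.factorization_prod (fun i _ => (hm i).ne'), Finset.sum_apply']
    have hLfact : L.factorization p = (powersetCard (s - k + 1) (univ : Finset (Fin s))).sup' h3
        (inf0 (fun i => (m i).factorization p)) := by
      rw [hL, factorization_finsetLcm h3 hgcdne p]
      apply sup'_congr h3 rfl
      intro T hT
      rw [mem_powersetCard] at hT
      have hTne : T.Nonempty := card_pos.mp (by omega)
      rw [inf0, dif_pos hTne]
      exact factorization_finsetGcd hTne (fun i _ => (hm i).ne') p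
    rw [hδfact k h1, hδfact (k - 1) h2, hLfact]
    exact core hk1 hks _ h1 h2 h3
  rw [key, Nat.mul_div_cancel_left _ (Nat.pos_of_ne_zero hδk1)]
end

section
/- Let n₁, n₂ be coprime positive natural numbers and q ≥ 2 a natural number. Then lcm(q^{n₁} - 1, q^{n₂} - 1) = (q^{n₁} - 1)(q^{n₂} - 1)/(q - 1). -/
theorem stmt_13 (q n₁ n₂ : ℕ) (hq : 2 ≤ q) (h₁ : 0 < n₁) (h₂ : 0 < n₂)
    (hco : Nat.Coprime n₁ n₂) :
    Nat.lcm (q ^ n₁ - 1) (q ^ n₂ - 1) = (q ^ n₁ - 1) * (q ^ n₂ - 1) / (q - 1) := by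
  have hq1 : 1 ≤ q := by omega
  have hd1 : q - 1 ∣ q ^ n₁ - 1 := by
    simpa using Nat.sub_dvd_pow_sub_pow q 1 n₁
  have hd2 : q - 1 ∣ q ^ n₂ - 1 := by
    simpa using Nat.sub_dvd_pow_sub_pow q 1 n₂
  have hgcd : Nat.gcd (q ^ n₁ - 1) (q ^ n₂ - 1) = q - 1 := by
    apply Nat.dvd_antisymm
    · set d := Nat.gcd (q ^ n₁ - 1) (q ^ n₂ - 1) with hd
      have hdd1 : d ∣ q ^ n₁ - 1 := Nat.gcd_dvd_left _ _
      have hdd2 : d ∣ q ^ n₂ - 1 := Nat.gcd_dvd_right _ _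
      have hm1 : q ^ n₁ ≡ 1 [MOD d] :=
        (Nat.modEq_iff_dvd' (Nat.one_le_pow _ _ (by omega))).2 hdd1 |>.symm
      have hm2 : q ^ n₂ ≡ 1 [MOD d] :=
        (Nat.modEq_iff_dvd' (Nat.one_le_pow _ _ (by omega))).2 hdd2 |>.symm
      have hz1 : (q : ZMod d) ^ n₁ = 1 := by
        have : ((q ^ n₁ : ℕ) : ZMod d) = ((1 : ℕ) : ZMod d) :=
          (ZMod.natCast_eq_natCast_iff _ _ _).2 hm1
        simpa using this
      have hz2 : (q : ZMod d) ^ n₂ = 1 := by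
        have : ((q ^ n₂ : ℕ) : ZMod d) = ((1 : ℕ) : ZMod d) :=
          (ZMod.natCast_eq_natCast_iff _ _ _).2 hm2
        simpa using this
      have ho1 : orderOf (q : ZMod d) ∣ n₁ := orderOf_dvd_of_pow_eq_one hz1
      have ho2 : orderOf (q : ZMod d) ∣ n₂ := orderOf_dvd_of_pow_eq_one hz2
      have ho : orderOf (q : ZMod d) ∣ 1 := hco ▸ Nat.dvd_gcd ho1 ho2
      have hone : (q : ZMod d) = 1 := orderOf_eq_one_iff.1 (Nat.dvd_one.1 ho)
      have : q ≡ 1 [MOD d] := by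
        have : ((q : ℕ) : ZMod d) = ((1 : ℕ) : ZMod d) := by simpa using hone
        exact (ZMod.natCast_eq_natCast_iff _ _ _).1 this
      exact (Nat.modEq_iff_dvd' hq1).1 this.symm
    · exact Nat.dvd_gcd hd1 hd2
  have key := Nat.gcd_mul_lcm (q ^ n₁ - 1) (q ^ n₂ - 1)
  rw [hgcd] at key
  have hqpos : 0 < q - 1 := by omega
  rw [← key, Nat.mul_div_cancel_left _ hqpos]
end

section
/- Let A = Z_{m₁} × ⋯ × Z_{m_s} with m_i positive natural numbers, and let d = gcd(m₁,…,m_s). Then A has a direct factor isomorphic to Z_d, i.e. A ≅ Z_d × A' for some abelian group A'. -/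
/-- Bezout identity for a finset gcd of naturals. -/
lemma bezout_finset {s : ℕ} (m : Fin s → ℕ) (t : Finset (Fin s)) :
    ∃ c : Fin s → ℤ, ∑ i ∈ t, c i * m i = ((t.gcd m : ℕ) : ℤ) := by
  classical
  induction t using Finset.induction_on with
  | empty => exact ⟨0, by simp⟩
  | @insert a t ha ih =>
    obtain ⟨c, hc⟩ := ih
    refine ⟨fun i => if i = a then Nat.gcdA (m a) (t.gcd m)
      else Nat.gcdB (m a) (t.gcd m) * c i, ?_⟩
    rw [Finset.sum_insert ha, Finset.gcd_insert]
    have : ∑ i ∈ t, (if i = a then Nat.gcdA (m a) (t.gcd m)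
        else Nat.gcdB (m a) (t.gcd m) * c i) * (m i : ℤ)
        = Nat.gcdB (m a) (t.gcd m) * ∑ i ∈ t, c i * (m i : ℤ) := by
      rw [Finset.mul_sum]
      refine Finset.sum_congr rfl fun i hi => ?_
      have : i ≠ a := fun h => ha (h ▸ hi)
      simp [this, mul_assoc]
    rw [this, hc]
    simp only [if_pos rfl]
    rw [show gcd (m a) (t.gcd m) = Nat.gcd (m a) (t.gcd m) from rfl]
    have h2 := Nat.gcd_eq_gcd_ab (m a) (t.gcd m)
    push_cast at h2 ⊢
    linarith

/-- Splitting lemma for abelian groups. -/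
def splitEquiv {A B : Type*} [AddCommGroup A] [AddCommGroup B]
    (φ : A →+ B) (ψ : B →+ A) (h : ∀ b, φ (ψ b) = b) :
    A ≃+ B × φ.ker where
  toFun a := (φ a, ⟨a - ψ (φ a), by simp [AddMonoidHom.mem_ker, h]⟩)
  invFun p := ψ p.1 + p.2
  left_inv a := by simp
  right_inv p := by
    obtain ⟨b, k, hk⟩ := p
    have hk' : φ k = 0 := hk
    ext
    · simp [hk', h]
    · simp [hk', h]
  map_add' a b := by
    ext <;> simp [map_add] <;> abel

theorem stmt_17 (s : ℕ) (hs : 1 ≤ s) (m : Fin s → ℕ) (hm : ∀ i, 0 < m i) :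
    ∃ A' : AddCommGrpCat,
      Nonempty ((∀ i, ZMod (m i)) ≃+ (ZMod (Finset.univ.gcd m) × A')) := by
  classical
  set d : ℕ := Finset.univ.gcd m with hd
  have hdvd : ∀ i, d ∣ m i := fun i => Finset.gcd_dvd (Finset.mem_univ i)
  have hd0 : d ≠ 0 := by
    intro h0
    have i0 : Fin s := ⟨0, hs⟩
    have := hdvd i0
    rw [h0] at this
    have := Nat.eq_zero_of_zero_dvd this
    exact (hm i0).ne' this
  obtain ⟨c, hc⟩ := bezout_finset m Finset.univ
  -- key identity: ∑ c i * (m i / d) = 1 in ℤ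
  have hk : ∀ i, (d : ℤ) * (m i / d : ℕ) = (m i : ℤ) := by
    intro i
    obtain ⟨u, hu⟩ := hdvd i
    rw [hu, Nat.mul_div_cancel_left u (Nat.pos_of_ne_zero hd0)]
    push_cast; ring
  have hsum1 : ∑ i, c i * ((m i / d : ℕ) : ℤ) = 1 := by
    have hdd : (d : ℤ) * ∑ i, c i * ((m i / d : ℕ) : ℤ) = (d : ℤ) := by
      rw [Finset.mul_sum]
      calc ∑ i, (d : ℤ) * (c i * ((m i / d : ℕ) : ℤ))
          = ∑ i, c i * (m i : ℤ) := by
            refine Finset.sum_congr rfl fun i _ => ?_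
            rw [← hk i]; ring
        _ = (d : ℤ) := hc
    refine mul_left_cancel₀ (show (d : ℤ) ≠ 0 by exact_mod_cast hd0) ?_
    rw [hdd, mul_one]
  -- the element e with d • e = 0 and φ e = 1
  set e : ∀ i, ZMod (m i) := fun i => ((c i * ((m i / d : ℕ) : ℤ) : ℤ) : ZMod (m i))
    with he
  have hde : (d : ℤ) • e = 0 := by
    funext i
    simp only [Pi.smul_apply, he, Pi.zero_apply, zsmul_eq_mul]
    rw [← Int.cast_mul]
    have : (d : ℤ) * (c i * ((m i / d : ℕ) : ℤ)) = c i * (m i : ℤ) := by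
      rw [← hk i]; ring
    rw [this]
    push_cast
    simp [ZMod.natCast_self]
  -- φ : sum of reductions
  let φ : (∀ i, ZMod (m i)) →+ ZMod d :=
    ∑ i, (ZMod.castHom (hdvd i) (ZMod d)).toAddMonoidHom.comp
      (Pi.evalAddMonoidHom (fun i => ZMod (m i)) i)
  have hφ : ∀ a, φ a = ∑ i, (ZMod.castHom (hdvd i) (ZMod d)) (a i) := by
    intro a
    simp [φ, AddMonoidHom.finset_sum_apply]
  have hφe : φ e = 1 := by
    rw [hφ]
    have : ∀ i, (ZMod.castHom (hdvd i) (ZMod d)) (e i)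
        = ((c i * ((m i / d : ℕ) : ℤ) : ℤ) : ZMod d) := by
      intro i
      simp only [he]
      exact map_intCast (ZMod.castHom (hdvd i) (ZMod d)) _
    rw [Finset.sum_congr rfl fun i _ => this i]
    rw [← Int.cast_sum, hsum1, Int.cast_one]
  -- ψ : ZMod d →+ A sending 1 to e
  let f : ℤ →+ (∀ i, ZMod (m i)) := zmultiplesHom _ e
  have hf : f d = 0 := by
    simpa [f, zmultiplesHom_apply] using hde
  let ψ : ZMod d →+ (∀ i, ZMod (m i)) := ZMod.lift d ⟨f, hf⟩
  have hsplit : ∀ b : ZMod d, φ (ψ b) = b := by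
    intro b
    obtain ⟨x, rfl⟩ := ZMod.intCast_surjective b
    have h1 : ψ ((x : ℤ) : ZMod d) = x • e := by
      simp [ψ, f, ZMod.lift_coe, zmultiplesHom_apply]
    rw [h1, map_zsmul, hφe]
    rw [zsmul_eq_mul, mul_one]
  exact ⟨AddCommGrpCat.of (ULift ↥φ.ker),
    ⟨(splitEquiv φ ψ hsplit).trans
      (AddEquiv.prodCongr (AddEquiv.refl _) AddEquiv.ulift.symm)⟩⟩
end
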